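/- Let ε > 0 and let X : [0,1] → ℝ be nondecreasing and integrable. Then (1/2)·∫₀¹∫₀¹ N_ε(X(z) − X(ζ)) dζ dz = (1/(4ε))·(1 − (2/ε)·∫₀¹ (2z − 1)·X(z) dz). -/

import Mathlib

open MeasureTheory Real Set

/-- The tent (triangular) potential `N_ε(x) = (1/(2ε))(1 - |x|/ε)`, the singular part of
the decomposition `W_ε = N_ε + S_ε` of the scaled Morse potential. -/
noncomputable def Ntent (ε x : ℝ) : ℝ := (1 / (2 * ε)) * (1 - |x| / ε)

lemma fubini_tri (Y : ℝ → ℝ) (hY : Monotone Y) :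
    ∫ z in (0:ℝ)..1, (∫ t in (0:ℝ)..z, Y t) = ∫ t in (0:ℝ)..1, (1 - t) * Y t := by
  have hYm : Measurable Y := hY.measurable
  have hμ : (volume.restrict (Ioc (0:ℝ) 1)) = volume.restrict (Ioc (0:ℝ) 1) := rfl
  set μ := volume.restrict (Ioc (0:ℝ) 1) with hμdef
  have hint : IntegrableOn Y (Ioc (0:ℝ) 1) :=
    (hY.monotoneOn _).integrableOn_isCompact isCompact_Icc |>.mono_set Ioc_subset_Icc_self
  -- integrability of the kernel on the product
  set h : ℝ → ℝ → ℝ := fun z t => ({q : ℝ × ℝ | q.2 ≤ q.1}).indicator (fun q => Y q.2) (z, t)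
    with hhdef
  have hmeas : Measurable (Function.uncurry h) := by
    have : Function.uncurry h = ({q : ℝ × ℝ | q.2 ≤ q.1}).indicator (fun q => Y q.2) := rfl
    rw [this]
    exact (hYm.comp measurable_snd).indicator (measurableSet_le measurable_snd measurable_fst)
  have hintprod : Integrable (Function.uncurry h) (μ.prod μ) := by
    rw [hμdef, Measure.prod_restrict]
    haveI : IsFiniteMeasure ((volume.prod volume).restrict ((Ioc (0:ℝ) 1) ×ˢ (Ioc (0:ℝ) 1))) := by
      constructor
      rw [Measure.restrict_apply_univ, Measure.prod_prod]
      exact ENNReal.mul_lt_top (by simp) (by simp)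
    refine (integrable_const (max |Y 0| |Y 1|)).mono' hmeas.aestronglyMeasurable.restrict ?_
    filter_upwards [ae_restrict_mem ((measurableSet_Ioc).prod measurableSet_Ioc)] with p hp
    have h2 : p.2 ∈ Ioc (0:ℝ) 1 := hp.2
    have : |Y p.2| ≤ max |Y 0| |Y 1| := by
      rcases abs_le_max_abs_abs (hY h2.1.le) (hY h2.2) with h
      exact h
    calc ‖Function.uncurry h p‖ = ‖({q : ℝ × ℝ | q.2 ≤ q.1}).indicator (fun q => Y q.2) p‖ := rfl
      _ ≤ ‖Y p.2‖ := norm_indicator_le_norm_self _ _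
      _ ≤ _ := this
  have key : ∫ z, (∫ t, h z t ∂μ) ∂μ = ∫ t, (∫ z, h z t ∂μ) ∂μ :=
    integral_integral_swap hintprod
  have lhs1 : ∫ z in (0:ℝ)..1, (∫ t in (0:ℝ)..z, Y t) = ∫ z, (∫ t, h z t ∂μ) ∂μ := by
    rw [intervalIntegral.integral_of_le zero_le_one]
    refine setIntegral_congr_fun measurableSet_Ioc (fun z hz => ?_)
    have h1 : (fun t => h z t) = (Iic z).indicator Y := by
      funext t
      by_cases ht : t ≤ z
      · simp [hhdef, indicator_of_mem, ht, Set.mem_setOf_eq, Set.mem_Iic]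
      · simp [hhdef, indicator_of_notMem, ht, Set.mem_setOf_eq, Set.mem_Iic]
    rw [h1, hμdef, setIntegral_indicator measurableSet_Iic]
    rw [Set.Ioc_inter_Iic, min_eq_right hz.2, intervalIntegral.integral_of_le hz.1.le]
  have rhs1 : ∫ t, (∫ z, h z t ∂μ) ∂μ = ∫ t in (0:ℝ)..1, (1 - t) * Y t := by
    rw [intervalIntegral.integral_of_le zero_le_one, hμdef]
    refine setIntegral_congr_fun measurableSet_Ioc (fun t ht => ?_)
    have h1 : (fun z => h z t) = (Ici t).indicator (fun _ => Y t) := by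
      funext z
      by_cases hzt : t ≤ z
      · simp [hhdef, indicator_of_mem, hzt, Set.mem_setOf_eq, Set.mem_Ici]
      · simp [hhdef, indicator_of_notMem, hzt, Set.mem_setOf_eq, Set.mem_Ici]
    rw [h1, setIntegral_indicator measurableSet_Ici, setIntegral_const]
    have h2 : Ioc (0:ℝ) 1 ∩ Ici t = Icc t 1 := by
      ext z
      simp only [Set.mem_inter_iff, Set.mem_Ioc, Set.mem_Ici, Set.mem_Icc]
      constructor
      · rintro ⟨⟨_, hz1⟩, hz2⟩; exact ⟨hz2, hz1⟩
      · rintro ⟨hz1, hz2⟩; exact ⟨⟨lt_of_lt_of_le ht.1 hz1, hz2⟩, hz1⟩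
    rw [h2, measureReal_def, Real.volume_Icc, ENNReal.toReal_ofReal (by linarith [ht.2])]
    simp [smul_eq_mul]
  rw [lhs1, key, rhs1]

/-- For `ε > 0` and `X : [0,1] → ℝ` nondecreasing and integrable,
`(1/2)∫₀¹∫₀¹ N_ε(X(z) - X(ζ)) dζ dz = (1/(4ε))(1 - (2/ε)∫₀¹ (2z-1) X(z) dz)`. -/
theorem stmt0 (ε : ℝ) (hε : 0 < ε) (X : ℝ → ℝ)
    (hmono : MonotoneOn X (Set.Icc 0 1))
    (hint : MeasureTheory.IntegrableOn X (Set.Icc 0 1)) :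
    (1 / 2) * ∫ z in (0:ℝ)..1, ∫ ζ in (0:ℝ)..1, Ntent ε (X z - X ζ) =
      (1 / (4 * ε)) * (1 - (2 / ε) * ∫ z in (0:ℝ)..1, (2 * z - 1) * X z) := by
  set Y : ℝ → ℝ := fun t => X (max 0 (min t 1)) with hYdef
  have hYmono : Monotone Y := by
    intro s t hst
    have hmem : ∀ u : ℝ, max 0 (min u 1) ∈ Icc (0:ℝ) 1 := fun u =>
      ⟨le_max_left _ _, max_le zero_le_one (min_le_right _ _)⟩
    exact hmono (hmem s) (hmem t) (max_le_max le_rfl (min_le_min_right _ hst))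
  have hXY : ∀ t ∈ Icc (0:ℝ) 1, X t = Y t := by
    intro t ht
    simp only [hYdef, min_eq_left ht.2, max_eq_right ht.1]
  have hYI : ∀ a b : ℝ, IntervalIntegrable Y volume a b := fun a b =>
    hYmono.intervalIntegrable
  have habs : ∀ z a b : ℝ, IntervalIntegrable (fun t => |Y z - Y t|) volume a b := fun z a b =>
    ((intervalIntegrable_const).sub (hYI a b)).abs
  set C : ℝ := ∫ t in (0:ℝ)..1, Y t with hCdef
  set A : ℝ := ∫ t in (0:ℝ)..1, t * Y t with hAdef
  set F : ℝ → ℝ := fun z => ∫ t in (0:ℝ)..z, Y t with hFdef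
  have htY : IntervalIntegrable (fun t => t * Y t) volume 0 1 :=
    (hYI 0 1).continuousOn_mul continuousOn_id
  -- the absolute-value inner integral
  have hinner_abs : ∀ z ∈ Icc (0:ℝ) 1,
      (∫ t in (0:ℝ)..1, |Y z - Y t|) = (2 * z - 1) * Y z + C - 2 * F z := by
    intro z hz
    have hsplit := intervalIntegral.integral_add_adjacent_intervals (habs z 0 z) (habs z z 1)
    have h1 : (∫ t in (0:ℝ)..z, |Y z - Y t|) = z * Y z - F z := by
      have : (∫ t in (0:ℝ)..z, |Y z - Y t|) = ∫ t in (0:ℝ)..z, (Y z - Y t) := by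
        refine intervalIntegral.integral_congr (fun t ht => ?_)
        rw [uIcc_of_le hz.1] at ht
        exact abs_of_nonneg (sub_nonneg.2 (hYmono ht.2))
      rw [this, intervalIntegral.integral_sub intervalIntegrable_const (hYI 0 z),
        intervalIntegral.integral_const]
      simp [hFdef, smul_eq_mul]
    have h2 : (∫ t in z..1, |Y z - Y t|) = (C - F z) - (1 - z) * Y z := by
      have : (∫ t in z..1, |Y z - Y t|) = ∫ t in z..1, (Y t - Y z) := by
        refine intervalIntegral.integral_congr (fun t ht => ?_)
        rw [uIcc_of_le hz.2] at ht
        rw [abs_sub_comm]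
        exact abs_of_nonneg (sub_nonneg.2 (hYmono ht.1))
      have hC : F z + ∫ t in z..1, Y t = C := by
        rw [hFdef, hCdef]
        exact intervalIntegral.integral_add_adjacent_intervals (hYI 0 z) (hYI z 1)
      rw [this, intervalIntegral.integral_sub (hYI z 1) intervalIntegrable_const,
        intervalIntegral.integral_const]
      have : (∫ t in z..1, Y t) = C - F z := by linarith
      rw [this]
      simp [smul_eq_mul]
    rw [← hsplit, h1, h2]
    ring
  -- the inner Ntent integral
  have hinner : ∀ z ∈ Icc (0:ℝ) 1,
      (∫ t in (0:ℝ)..1, Ntent ε (X z - X t)) =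
        1 / (2 * ε) - ((2 * z - 1) * Y z + C - 2 * F z) * (1 / (2 * ε ^ 2)) := by
    intro z hz
    have step1 : (∫ t in (0:ℝ)..1, Ntent ε (X z - X t)) =
        ∫ t in (0:ℝ)..1, (1 / (2 * ε) - |Y z - Y t| * (1 / (2 * ε ^ 2))) := by
      refine intervalIntegral.integral_congr (fun t ht => ?_)
      rw [uIcc_of_le zero_le_one] at ht
      rw [hXY z hz, hXY t ht]
      unfold Ntent
      have : ε ≠ 0 := ne_of_gt hε
      field_simp
    rw [step1, intervalIntegral.integral_sub intervalIntegrable_const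
      ((habs z 0 1).mul_const _), intervalIntegral.integral_const,
      intervalIntegral.integral_mul_const, hinner_abs z hz]
    simp [smul_eq_mul]
  -- outer integral
  have hFcont : ContinuousOn F (uIcc (0:ℝ) 1) :=
    intervalIntegral.continuousOn_primitive_interval
      ((hYmono.monotoneOn _).integrableOn_isCompact isCompact_uIcc)
  have hFI : IntervalIntegrable F volume 0 1 := hFcont.intervalIntegrable
  have h2zY : IntervalIntegrable (fun z => (2 * z - 1) * Y z) volume 0 1 :=
    (hYI 0 1).continuousOn_mul (by fun_prop)
  have houter : (∫ z in (0:ℝ)..1, ∫ t in (0:ℝ)..1, Ntent ε (X z - X t)) =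
      ∫ z in (0:ℝ)..1,
        ((1 / (2 * ε) - C * (1 / (2 * ε ^ 2))) +
          ((-(1 / (2 * ε ^ 2))) * ((2 * z - 1) * Y z) + (2 * (1 / (2 * ε ^ 2))) * F z)) := by
    refine intervalIntegral.integral_congr (fun z hz => ?_)
    rw [uIcc_of_le zero_le_one] at hz
    rw [hinner z hz]
    ring
  have hJ : (∫ z in (0:ℝ)..1, (2 * z - 1) * Y z) = 2 * A - C := by
    have : ∀ z : ℝ, (2 * z - 1) * Y z = 2 * (z * Y z) - Y z := fun z => by ring
    simp_rw [this]
    rw [intervalIntegral.integral_sub (htY.const_mul 2) (hYI 0 1),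
      intervalIntegral.integral_const_mul]
  have hFint : (∫ z in (0:ℝ)..1, F z) = C - A := by
    rw [hFdef, fubini_tri Y hYmono]
    have : ∀ t : ℝ, (1 - t) * Y t = Y t - t * Y t := fun t => by ring
    simp_rw [this]
    rw [intervalIntegral.integral_sub (hYI 0 1) htY]
  have hX2 : (∫ z in (0:ℝ)..1, (2 * z - 1) * X z) = 2 * A - C := by
    rw [← hJ]
    refine intervalIntegral.integral_congr (fun z hz => ?_)
    rw [uIcc_of_le zero_le_one] at hz
    rw [hXY z hz]
  rw [houter, hX2,
    intervalIntegral.integral_add (intervalIntegrable_const)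
      ((h2zY.const_mul _).add (hFI.const_mul _)),
    intervalIntegral.integral_add (h2zY.const_mul _) (hFI.const_mul _),
    intervalIntegral.integral_const_mul, intervalIntegral.integral_const_mul,
    hJ, hFint, intervalIntegral.integral_const]
  have hεne : ε ≠ 0 := ne_of_gt hε
  field_simp
  have h1 : ε ^ 2 * ε⁻¹ ^ 2 = 1 := by rw [← mul_pow, mul_inv_cancel₀ hεne, one_pow]
  linear_combination (4 * ε - 4 * C) * h1
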